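/- Let q, b, r be even integers and suppose the identity (1 − A^{4q})² · (A^{4r} − A^{4b}) = (A² + A⁻²)² · (1 − A^{4q}) · (A^{4r} − A^{4b}) holds in ℤ[A, A⁻¹]. Then q = 0 or b = r. -/

import Mathlib

open LaurentPolynomial

theorem even_bracket_identity_core' (q b r : ℤ)
    (hq : Even q) (hb : Even b) (hr : Even r)
    (hid : ((1 : LaurentPolynomial ℤ) - T (4 * q)) ^ 2 * (T (4 * r) - T (4 * b))
        = ((T 2 + T (-2) : LaurentPolynomial ℤ)) ^ 2 * (1 - T (4 * q)) * (T (4 * r) - T (4 * b))) :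
    q = 0 ∨ b = r := by
  by_contra h
  push_neg at h
  obtain ⟨hq0, hbr⟩ := h
  have hX : (T (4 * r) - T (4 * b) : LaurentPolynomial ℤ) ≠ 0 := by
    intro hE
    rw [sub_eq_zero] at hE
    have := congrArg (·.coeff (4 * r)) hE
    simp only [T_apply] at this
    rw [if_neg (by omega : ¬ 4 * b = 4 * r)] at this
    exact one_ne_zero this
  have hY : ((1 : LaurentPolynomial ℤ) - T (4 * q)) ≠ 0 := by
    intro hE
    rw [sub_eq_zero, ← T_zero] at hE
    have := congrArg (·.coeff (4 * q)) hE
    simp only [T_apply] at this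
    simp [(by omega : ¬ (0:ℤ) = 4 * q)] at this
    exact hq0 this
  have h1 : ((1 : LaurentPolynomial ℤ) - T (4 * q)) ^ 2
      = (T 2 + T (-2) : LaurentPolynomial ℤ) ^ 2 * (1 - T (4 * q)) :=
    mul_right_cancel₀ hX hid
  rw [sq ((1 : LaurentPolynomial ℤ) - T (4 * q))] at h1
  have h2 : ((1 : LaurentPolynomial ℤ) - T (4 * q))
      = (T 2 + T (-2) : LaurentPolynomial ℤ) ^ 2 := mul_right_cancel₀ hY h1
  -- evaluate at T ↦ 1
  let φ : LaurentPolynomial ℤ →ₐ[ℤ] ℤ := (AddMonoidAlgebra.lift ℤ ℤ ℤ) 1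
  have hφT : ∀ n : ℤ, φ (T n) = 1 := by
    intro n
    show ((AddMonoidAlgebra.lift ℤ ℤ ℤ) 1) (AddMonoidAlgebra.single n 1) = 1
    rw [AddMonoidAlgebra.lift_single]
    simp
  have h5 := congrArg φ h2
  simp only [map_sub, map_add, map_pow, map_one, hφT] at h5
  norm_num at h5
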